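/- Let f : ℝ⁺ → ℝ⁺ be a homeomorphism which is smooth on ℝ⁺ and restricts to a diffeomorphism of (0,∞). If f is non-flat at 0, i.e. some derivative f^(k)(0) is nonzero, then the function f/f', defined on (0,∞), extends to a smooth function on ℝ⁺ = [0,∞). -/

import Mathlib

open Set Function MeasureTheory intervalIntegral Filter Topology
open scoped ContDiff

noncomputable section

/-- `f` is a `Cᵏ` map on the half-line `ℝ⁺ = [0,∞)`: it extends to a `Cᵏ` map
on `(−ε, ∞)` for some `ε > 0`. -/
def CkOnHalfLine (k : WithTop ℕ∞) (f : ℝ → ℝ) : Prop :=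
  ∃ ε : ℝ, 0 < ε ∧ ∃ F : ℝ → ℝ, ContDiffOn ℝ k F (Ioi (-ε)) ∧ EqOn f F (Ici 0)

/-- `f : ℝ⁺ → ℝ⁺` is a homeomorphism of `ℝ⁺ = [0,∞)` which is smooth on `ℝ⁺` and restricts
to a diffeomorphism of `(0,∞)`. -/
structure GoodHalfLineMap (f : ℝ → ℝ) : Prop where
  bijOn : BijOn f (Ici 0) (Ici 0)
  continuousOn : ContinuousOn f (Ici 0)
  smooth : CkOnHalfLine ∞ f
  bijOn_Ioi : BijOn f (Ioi 0) (Ioi 0)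
  deriv_ne : ∀ y : ℝ, 0 < y → deriv f y ≠ 0



/-- step function family -/
private def Psi (Φ : ℝ → ℝ) (n : ℕ) (y : ℝ) : ℝ :=
  ∫ t in (0:ℝ)..1, t ^ n * iteratedDeriv (n + 1) Φ (t * y)

private lemma hasDerivAt_iteratedDeriv {Φ : ℝ → ℝ} (hΦ : ContDiff ℝ ∞ Φ) (n : ℕ) (x : ℝ) :
    HasDerivAt (iteratedDeriv n Φ) (iteratedDeriv (n + 1) Φ x) x := by
  have hd : Differentiable ℝ (iteratedDeriv n Φ) :=
    hΦ.differentiable_iteratedDeriv n (by exact_mod_cast WithTop.coe_lt_top n)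
  have h := (hd x).hasDerivAt
  rw [iteratedDeriv_succ]
  exact h

private lemma hasDerivAt_Psi {Φ : ℝ → ℝ} (hΦ : ContDiff ℝ ∞ Φ) (n : ℕ) (y₀ : ℝ) :
    HasDerivAt (Psi Φ n) (Psi Φ (n + 1) y₀) y₀ := by
  have hcont : ∀ m : ℕ, Continuous (iteratedDeriv m Φ) :=
    fun m => hΦ.continuous_iteratedDeriv m (by exact_mod_cast le_top)
  -- bound on a compact set
  have hK : IsCompact ((Icc (0:ℝ) 1) ×ˢ (Icc (y₀ - 1) (y₀ + 1))) :=
    isCompact_Icc.prod isCompact_Icc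
  have hgc : Continuous fun p : ℝ × ℝ => p.1 ^ (n + 1) * iteratedDeriv (n + 2) Φ (p.1 * p.2) :=
    (continuous_fst.pow _).mul ((hcont (n + 2)).comp (continuous_fst.mul continuous_snd))
  obtain ⟨C, hC⟩ := hK.exists_bound_of_continuousOn hgc.continuousOn
  have key := intervalIntegral.hasDerivAt_integral_of_dominated_loc_of_deriv_le
    (F := fun y t => t ^ n * iteratedDeriv (n + 1) Φ (t * y))
    (F' := fun y t => t ^ (n + 1) * iteratedDeriv (n + 2) Φ (t * y))
    (x₀ := y₀) (a := (0:ℝ)) (b := 1) (μ := volume) (bound := fun _ => C)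
    (s := Metric.ball y₀ 1) (Metric.ball_mem_nhds y₀ one_pos)
    (Filter.Eventually.of_forall fun x =>
      (((continuous_id.pow n).mul ((hcont (n + 1)).comp
        (continuous_id.mul continuous_const))).aestronglyMeasurable))
    (((continuous_id.pow n).mul ((hcont (n + 1)).comp
        (continuous_id.mul continuous_const))).intervalIntegrable 0 1)
    (((continuous_id.pow (n + 1)).mul ((hcont (n + 2)).comp
        (continuous_id.mul continuous_const))).aestronglyMeasurable)
    (Filter.Eventually.of_forall fun t ht x hx => by
      have ht' : t ∈ Icc (0:ℝ) 1 := by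
        rw [uIoc_of_le (by norm_num : (0:ℝ) ≤ 1)] at ht
        exact ⟨le_of_lt ht.1, ht.2⟩
      have hx' : x ∈ Icc (y₀ - 1) (y₀ + 1) := by
        have := abs_lt.1 (mem_ball_iff_norm.1 hx)
        constructor <;> linarith [this.1, this.2]
      exact hC (t, x) ⟨ht', hx'⟩)
    (intervalIntegrable_const)
    (Filter.Eventually.of_forall fun t ht x hx => by
      have h1 : HasDerivAt (fun x : ℝ => t * x) t x := by
        simpa using (hasDerivAt_id x).const_mul t
      have h2 := (hasDerivAt_iteratedDeriv hΦ (n + 1) (t * x)).comp x h1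
      have h3 := h2.const_mul (t ^ n)
      refine h3.congr_deriv ?_
      show t ^ n * (iteratedDeriv (n + 2) Φ (t * x) * t) = t ^ (n + 1) * iteratedDeriv (n + 2) Φ (t * x)
      ring)
  exact key.2

private lemma psi_chain {Φ : ℝ → ℝ} (hΦ : ContDiff ℝ ∞ Φ) :
    ContDiff ℝ ∞ (Psi Φ 0) := by
  have hd : ∀ n, deriv (Psi Φ n) = Psi Φ (n + 1) :=
    fun n => funext fun y => (hasDerivAt_Psi hΦ n y).deriv
  have hdiff : ∀ n, Differentiable ℝ (Psi Φ n) :=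
    fun n y => (hasDerivAt_Psi hΦ n y).differentiableAt
  have hit : ∀ m, iteratedDeriv m (Psi Φ 0) = Psi Φ m := by
    intro m
    induction m with
    | zero => simp [iteratedDeriv_zero]
    | succ m ih => rw [iteratedDeriv_succ, ih, hd m]
  exact contDiff_of_differentiable_iteratedDeriv fun m _ => (hit m) ▸ hdiff m

/-- Hadamard's lemma, one step. -/
private lemma hadamard_step {Φ : ℝ → ℝ} (hΦ : ContDiff ℝ ∞ Φ) (h0 : Φ 0 = 0) :
    ∃ Ψ : ℝ → ℝ, ContDiff ℝ ∞ Ψ ∧ (∀ y, Φ y = y * Ψ y) := by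
  refine ⟨Psi Φ 0, psi_chain hΦ, fun y => ?_⟩
  rcases eq_or_ne y 0 with rfl | hy
  · simpa using h0
  · have h1 : Psi Φ 0 y = ∫ t in (0:ℝ)..1, deriv Φ (t * y) := by
      simp [Psi, iteratedDeriv_one]
    have h2 : (∫ t in (0:ℝ)..1, deriv Φ (t * y)) = y⁻¹ • ∫ s in (0*y)..(1*y), deriv Φ s :=
      intervalIntegral.integral_comp_mul_right (fun s => deriv Φ s) hy
    have h3 : (∫ s in (0:ℝ)..y, deriv Φ s) = Φ y - Φ 0 :=
      intervalIntegral.integral_deriv_eq_sub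
        (fun x _ => (hΦ.differentiable (by simp)).differentiableAt)
        (((contDiff_infty_iff_deriv.1 hΦ).2.continuous).intervalIntegrable 0 y)
    rw [h1, h2]
    rw [zero_mul, one_mul, h3, h0, sub_zero, smul_eq_mul]
    field_simp

private lemma leibniz_mul_id {Ψ : ℝ → ℝ} (hΨ : ContDiff ℝ ∞ Ψ) (j : ℕ) (y : ℝ) :
    iteratedDeriv (j + 1) (fun x => x * Ψ x) y
      = y * iteratedDeriv (j + 1) Ψ y + (j + 1) * iteratedDeriv j Ψ y := by
  induction j generalizing y with
  | zero =>
    rw [iteratedDeriv_one]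
    have h := ((hasDerivAt_id y).mul
      (hasDerivAt_iteratedDeriv hΨ 0 y)).deriv
    simp only [iteratedDeriv_zero, id] at h ⊢
    rw [show (fun x => x * Ψ x) = id * Ψ from rfl, h, iteratedDeriv_one]
    push_cast
    ring
  | succ j ih =>
    rw [iteratedDeriv_succ]
    have hfun : iteratedDeriv (j + 1) (fun x => x * Ψ x)
        = fun y => y * iteratedDeriv (j + 1) Ψ y + (j + 1) * iteratedDeriv j Ψ y :=
      funext fun y => ih y
    rw [hfun]
    have h1 : HasDerivAt (fun y => y * iteratedDeriv (j + 1) Ψ y)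
        (iteratedDeriv (j + 1) Ψ y + y * iteratedDeriv (j + 2) Ψ y) y := by
      have := (hasDerivAt_id y).mul (hasDerivAt_iteratedDeriv hΨ (j + 1) y)
      exact this.congr_deriv
        (congrArg (fun z => z + y * iteratedDeriv (j + 2) Ψ y) (one_mul (iteratedDeriv (j + 1) Ψ y)))
    have h2 : HasDerivAt (fun y => ((j:ℝ) + 1) * iteratedDeriv j Ψ y)
        (((j:ℝ) + 1) * iteratedDeriv (j + 1) Ψ y) y :=
      (hasDerivAt_iteratedDeriv hΨ j y).const_mul _
    have h3 : deriv (fun y => y * iteratedDeriv (j + 1) Ψ y + ((j:ℝ) + 1) * iteratedDeriv j Ψ y) y = _ :=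
      (h1.add h2).deriv
    rw [show (fun y => y * iteratedDeriv (j + 1) Ψ y + (↑j + 1) * iteratedDeriv j Ψ y)
      = (fun y => y * iteratedDeriv (j + 1) Ψ y + (((j:ℝ) + 1)) * iteratedDeriv j Ψ y) by
        push_cast; rfl, h3]
    push_cast
    ring

/-- Hadamard's lemma at order `k`. -/
private lemma hadamard_order (k : ℕ) : ∀ {Φ : ℝ → ℝ}, ContDiff ℝ ∞ Φ →
    (∀ j < k, iteratedDeriv j Φ 0 = 0) →
    ∃ Ψ : ℝ → ℝ, ContDiff ℝ ∞ Ψ ∧ (∀ y, Φ y = y ^ k * Ψ y) ∧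
      iteratedDeriv k Φ 0 = ((Nat.factorial k : ℕ) : ℝ) * Ψ 0 := by
  induction k with
  | zero =>
    intro Φ hΦ _
    exact ⟨Φ, hΦ, fun y => by simp, by simp⟩
  | succ k ih =>
    intro Φ hΦ h0
    have hΦ0 : Φ 0 = 0 := by simpa using h0 0 (Nat.succ_pos k)
    obtain ⟨Ψ₁, hΨ₁, hfac₁⟩ := hadamard_step hΦ hΦ0
    have hΦfun : Φ = fun x => x * Ψ₁ x := funext hfac₁
    have hlb : ∀ j y, iteratedDeriv (j + 1) Φ y
        = y * iteratedDeriv (j + 1) Ψ₁ y + (j + 1) * iteratedDeriv j Ψ₁ y := by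
      intro j y; rw [hΦfun]; exact leibniz_mul_id hΨ₁ j y
    have h0' : ∀ j < k, iteratedDeriv j Ψ₁ 0 = 0 := by
      intro j hj
      have := hlb j 0
      rw [h0 (j + 1) (by omega)] at this
      have hj1 : ((j : ℝ) + 1) ≠ 0 := by positivity
      simp only [zero_mul, zero_add] at this
      field_simp at this
      exact (mul_eq_zero.1 this.symm).resolve_left hj1
    obtain ⟨Ψ, hΨ, hfac, hval⟩ := ih hΨ₁ h0'
    refine ⟨Ψ, hΨ, fun y => by rw [hfac₁ y, hfac y]; ring, ?_⟩
    have := hlb k 0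
    rw [this, hval]
    simp [Nat.factorial_succ]
    push_cast
    ring


private lemma exists_global_ext {f : ℝ → ℝ} (h : CkOnHalfLine ∞ f) :
    ∃ F : ℝ → ℝ, ContDiff ℝ ∞ F ∧ EqOn f F (Ici 0) := by
  obtain ⟨ε, hε, F, hF, hEq⟩ := h
  set χ : ℝ → ℝ := fun x => Real.smoothTransition ((x + ε / 2) / (ε / 4)) with hχ
  have hχsm : ContDiff ℝ ∞ χ :=
    Real.smoothTransition.contDiff.comp
      ((contDiff_id.add contDiff_const).div_const _)
  refine ⟨fun x => if -ε < x then χ x * F x else 0, ?_, ?_⟩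
  · rw [contDiff_iff_contDiffAt]
    intro x
    rcases lt_or_ge (-ε) x with hx | hx
    · have hev : ∀ᶠ y in 𝓝 x, (if -ε < y then χ y * F y else 0) = χ y * F y := by
        filter_upwards [Ioi_mem_nhds hx] with y hy
        rw [if_pos (mem_Ioi.1 hy)]
      exact (hχsm.contDiffAt.mul (hF.contDiffAt (isOpen_Ioi.mem_nhds hx))).congr_of_eventuallyEq hev
    · have hx2 : x < -ε / 2 := by linarith
      have hev : ∀ᶠ y in 𝓝 x, (if -ε < y then χ y * F y else 0) = 0 := by
        filter_upwards [Iio_mem_nhds hx2] with y hy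
        by_cases hy' : -ε < y
        · rw [if_pos hy', hχ]
          have hle : (y + ε / 2) / (ε / 4) ≤ 0 := by
            apply div_nonpos_of_nonpos_of_nonneg <;> [skip; linarith]
            have : y < -ε / 2 := hy
            linarith
          show χ y * F y = 0
          rw [hχ]
          simp only []
          rw [Real.smoothTransition.zero_of_nonpos hle, zero_mul]
        · rw [if_neg hy']
      exact contDiffAt_const.congr_of_eventuallyEq hev
  · intro x hx
    have hx0 : (0:ℝ) ≤ x := hx
    have hpos : -ε < x := by linarith
    simp only [if_pos hpos]
    have h1 : χ x = 1 := by
      rw [hχ]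
      exact Real.smoothTransition.one_of_one_le
        ((one_le_div (by linarith)).2 (by linarith))
    rw [h1, one_mul]
    exact hEq hx

private lemma iteratedDerivWithin_Ici_eq {g : ℝ → ℝ} (hg : ContDiff ℝ ∞ g) (n : ℕ) :
    iteratedDerivWithin n g (Ici (0:ℝ)) 0 = iteratedDeriv n g 0 := by
  rw [iteratedDerivWithin_eq_iteratedFDerivWithin, iteratedDeriv_eq_iteratedFDeriv]
  congr 1
  have h : HasFTaylorSeriesUpTo ((⊤:ℕ∞) : WithTop ℕ∞) g (ftaylorSeries ℝ g) :=
    contDiff_iff_ftaylorSeries.1 hg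
  have h2 := (h.hasFTaylorSeriesUpToOn (Ici 0)).eq_iteratedFDerivWithin_of_uniqueDiffOn
    (m := n) (by exact_mod_cast le_top) (uniqueDiffOn_Ici 0) self_mem_Ici
  rw [← h2]
  exact (h.eq_iteratedFDeriv (by exact_mod_cast le_top) 0).symm

/-- **Lemma (non-flat maps satisfy the condition).** Let `f : ℝ⁺ → ℝ⁺` be a homeomorphism
which is smooth on `ℝ⁺` and restricts to a diffeomorphism of `(0,∞)`. If `f` is non-flat at
`0`, i.e. some derivative `f⁽ᵏ⁾(0)` is nonzero, then `f/f'`, defined on `(0,∞)`, extends to a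
smooth function on `ℝ⁺ = [0,∞)`. -/

theorem nonflat_satisfies_condition (f : ℝ → ℝ) (hf : GoodHalfLineMap f)
    (hnonflat : ∃ m : ℕ, iteratedDerivWithin m f (Ici 0) 0 ≠ 0) :
    ∃ q : ℝ → ℝ, CkOnHalfLine ∞ q ∧ ∀ y : ℝ, 0 < y → q y = f y / deriv f y := by
  classical
  obtain ⟨Ft, hFt, hEq⟩ := exists_global_ext hf.smooth
  have hf0 : f 0 = 0 := by
    by_contra h
    have h1 : f 0 ∈ Ici (0:ℝ) := hf.bijOn.mapsTo self_mem_Ici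
    have hpos : 0 < f 0 := lt_of_le_of_ne h1 (Ne.symm h)
    obtain ⟨y, hy, hyf⟩ := hf.bijOn_Ioi.surjOn (mem_Ioi.2 hpos)
    have hy0 : y = 0 := hf.bijOn.injOn (le_of_lt (mem_Ioi.1 hy)) self_mem_Ici hyf
    exact (mem_Ioi.1 hy).ne' hy0
  have hFt0 : Ft 0 = 0 := by rw [← hEq self_mem_Ici]; exact hf0
  obtain ⟨m₀, hm₀⟩ := hnonflat
  have hm₀' : iteratedDeriv m₀ Ft 0 ≠ 0 := by
    rw [← iteratedDerivWithin_Ici_eq hFt m₀]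
    intro hcon
    apply hm₀
    rw [iteratedDerivWithin_congr hEq self_mem_Ici]
    exact hcon
  have hex : ∃ m, iteratedDeriv m Ft 0 ≠ 0 := ⟨m₀, hm₀'⟩
  have hkspec := Nat.find_spec hex
  have hkmin : ∀ j < Nat.find hex, iteratedDeriv j Ft 0 = 0 :=
    fun j hj => not_not.1 (Nat.find_min hex hj)
  have hkpos : Nat.find hex ≠ 0 := by
    intro h
    apply hkspec
    rw [h, iteratedDeriv_zero, hFt0]
  obtain ⟨m, hm⟩ := Nat.exists_eq_succ_of_ne_zero hkpos
  obtain ⟨G, hG, hfac, hval⟩ :=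
    hadamard_order (m + 1) hFt (fun j hj => hkmin j (by omega))
  have hG0 : G 0 ≠ 0 := by
    intro h
    apply hkspec
    rw [hm, hval, h, mul_zero]
  set H : ℝ → ℝ := fun y => ((m:ℝ) + 1) * G y + y * deriv G y with hH
  have hGd : ContDiff ℝ ∞ (deriv G) := (contDiff_infty_iff_deriv.1 hG).2
  have hHsm : ContDiff ℝ ∞ H := (contDiff_const.mul hG).add (contDiff_id.mul hGd)
  have hderivFt : ∀ x, deriv Ft x = x ^ m * H x := by
    intro x
    have h1 : HasDerivAt (fun y => y ^ (m + 1) * G y)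
        ((((m + 1 : ℕ) : ℝ) * x ^ m) * G x + x ^ (m + 1) * deriv G x) x :=
      (hasDerivAt_pow (m + 1) x).mul
        ((hG.differentiable (by simp)) x).hasDerivAt
    rw [funext hfac, h1.deriv, hH]
    simp only []
    push_cast
    ring
  have hdfderiv : ∀ y : ℝ, 0 < y → deriv f y = y ^ m * H y := by
    intro y hy
    have hev : f =ᶠ[𝓝 y] Ft := eventuallyEq_of_mem (Ici_mem_nhds hy) hEq
    rw [hev.deriv_eq, hderivFt]
  have hHne : ∀ y : ℝ, 0 < y → H y ≠ 0 := by
    intro y hy h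
    apply hf.deriv_ne y hy
    rw [hdfderiv y hy, h, mul_zero]
  have hH0 : H 0 ≠ 0 := by
    rw [hH]
    simp only [zero_mul, add_zero]
    exact mul_ne_zero (by positivity) hG0
  have hev0 : ∀ᶠ x in 𝓝 (0:ℝ), H x ≠ 0 :=
    hHsm.continuous.continuousAt.eventually_ne hH0
  obtain ⟨δ, hδ, hball⟩ := Metric.eventually_nhds_iff.1 hev0
  have hne : ∀ x ∈ Ioi (-δ), H x ≠ 0 := by
    intro x hx
    rcases lt_or_ge 0 x with h | h
    · exact hHne x h
    · apply hball
      rw [Real.dist_eq, sub_zero, abs_of_nonpos h]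
      have := mem_Ioi.1 hx
      linarith
  refine ⟨fun y => y * G y / H y,
    ⟨δ, hδ, fun y => y * G y / H y,
      ((contDiff_id.mul hG).contDiffOn).div hHsm.contDiffOn hne, fun x _ => rfl⟩, ?_⟩
  intro y hy
  have hfy : f y = y ^ (m + 1) * G y := by
    rw [hEq (le_of_lt hy : y ∈ Ici 0)]
    exact hfac y
  rw [hfy, hdfderiv y hy]
  have hHy := hHne y hy
  have hy0 : y ≠ 0 := ne_of_gt hy
  field_simp
  ring

end
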